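/- arXiv:2112.03510 — 2 statements merged into one kernel-verified Lean document; each statement's English description precedes it below -/
import Mathlib

section
/- Let λ > 0, r > 0 and a ∈ ℝ. Then the function h(u) = 2r ∫₀ᵘ λ·artanh(s/λ) ds + a·u attains a global minimum over the open interval (−λ, λ) at the unique point u* = λ·tanh(−a/(2λr)); that is, h(u*) ≤ h(u) for all u ∈ (−λ, λ), with equality only when u = u*. -/
/-- Inverse hyperbolic tangent: the inverse of `tanh` on `(-1, 1)`. -/
noncomputable def artanh (x : ℝ) : ℝ := Real.log ((1 + x) / (1 - x)) / 2

lemma tanh_eq_exp (x : ℝ) :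
    Real.tanh x = (Real.exp x - (Real.exp x)⁻¹) / (Real.exp x + (Real.exp x)⁻¹) := by
  rw [Real.tanh_eq_sinh_div_cosh, Real.sinh_eq, Real.cosh_eq, Real.exp_neg]
  have h : (0:ℝ) < Real.exp x + (Real.exp x)⁻¹ :=
    add_pos (Real.exp_pos x) (inv_pos.mpr (Real.exp_pos x))
  field_simp

lemma tanh_mem_Ioo (x : ℝ) : Real.tanh x ∈ Set.Ioo (-1 : ℝ) 1 := by
  rw [tanh_eq_exp]
  have hE : (0:ℝ) < Real.exp x := Real.exp_pos x
  have hI : (0:ℝ) < (Real.exp x)⁻¹ := inv_pos.mpr hE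
  have h : (0:ℝ) < Real.exp x + (Real.exp x)⁻¹ := add_pos hE hI
  constructor
  · rw [lt_div_iff₀ h]; nlinarith
  · rw [div_lt_iff₀ h]; nlinarith

lemma artanh_tanh (x : ℝ) : artanh (Real.tanh x) = x := by
  have hE : (0:ℝ) < Real.exp x := Real.exp_pos x
  have hI : (0:ℝ) < (Real.exp x)⁻¹ := inv_pos.mpr hE
  have h : (0:ℝ) < Real.exp x + (Real.exp x)⁻¹ := add_pos hE hI
  have key : (1 + Real.tanh x) / (1 - Real.tanh x) = Real.exp x * Real.exp x := by
    rw [tanh_eq_exp]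
    have h1 : 1 - (Real.exp x - (Real.exp x)⁻¹) / (Real.exp x + (Real.exp x)⁻¹)
        = 2 * (Real.exp x)⁻¹ / (Real.exp x + (Real.exp x)⁻¹) := by
      field_simp; ring
    have h2 : 1 + (Real.exp x - (Real.exp x)⁻¹) / (Real.exp x + (Real.exp x)⁻¹)
        = 2 * Real.exp x / (Real.exp x + (Real.exp x)⁻¹) := by
      field_simp; ring
    rw [h1, h2, div_div_div_eq]
    rw [div_eq_iff (by positivity)]
    field_simp
  rw [artanh, key, ← Real.exp_add, Real.log_exp]
  ring

lemma artanh_strictMonoOn : StrictMonoOn artanh (Set.Ioo (-1 : ℝ) 1) := by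
  intro x hx y hy hxy
  have hx1 : 0 < 1 - x := by linarith [hx.2]
  have hy1 : 0 < 1 - y := by linarith [hy.2]
  have hx2 : 0 < 1 + x := by linarith [hx.1]
  have hy2 : 0 < 1 + y := by linarith [hy.1]
  have h : (1 + x) / (1 - x) < (1 + y) / (1 - y) := by
    rw [div_lt_div_iff₀ hx1 hy1]; nlinarith
  have := Real.log_lt_log (div_pos hx2 hx1) h
  unfold artanh; linarith

lemma continuousAt_artanh {x : ℝ} (hx : x ∈ Set.Ioo (-1 : ℝ) 1) : ContinuousAt artanh x := by
  have hx1 : (0:ℝ) < 1 - x := by linarith [hx.2]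
  have hx2 : (0:ℝ) < 1 + x := by linarith [hx.1]
  have h1 : ContinuousAt (fun y : ℝ => (1 + y) / (1 - y)) x :=
    ContinuousAt.div (by fun_prop) (by fun_prop) (ne_of_gt hx1)
  exact (h1.log (ne_of_gt (div_pos hx2 hx1))).div_const 2

/-- The scalar Hamiltonian contribution `h(u) = 2r ∫₀ᵘ λ·artanh(s/λ) ds + a·u`
attains its global minimum over `(−λ, λ)` at the unique point
`u* = λ·tanh(−a/(2λr))`. -/
theorem hamiltonian_scalar_min (lam r a : ℝ) (hlam : 0 < lam) (hr : 0 < r) :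
    lam * Real.tanh (-a / (2 * lam * r)) ∈ Set.Ioo (-lam) lam ∧
      (∀ u ∈ Set.Ioo (-lam) lam,
        (2 * r * ∫ s in (0 : ℝ)..(lam * Real.tanh (-a / (2 * lam * r))),
            lam * artanh (s / lam)) + a * (lam * Real.tanh (-a / (2 * lam * r))) ≤
          (2 * r * ∫ s in (0 : ℝ)..u, lam * artanh (s / lam)) + a * u) ∧
      ∀ u ∈ Set.Ioo (-lam) lam,
        (2 * r * ∫ s in (0 : ℝ)..u, lam * artanh (s / lam)) + a * u =
            (2 * r * ∫ s in (0 : ℝ)..(lam * Real.tanh (-a / (2 * lam * r))),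
              lam * artanh (s / lam)) + a * (lam * Real.tanh (-a / (2 * lam * r))) →
          u = lam * Real.tanh (-a / (2 * lam * r)) := by
  set x₀ : ℝ := -a / (2 * lam * r) with hx₀
  set ustar : ℝ := lam * Real.tanh x₀ with hustar
  set g : ℝ → ℝ := fun s => lam * artanh (s / lam) with hg
  set H : ℝ → ℝ := fun u => (2 * r * ∫ s in (0 : ℝ)..u, lam * artanh (s / lam)) + a * u with hH
  have htm := tanh_mem_Ioo x₀
  have hmem : ustar ∈ Set.Ioo (-lam) lam := by
    constructor
    · have := htm.1; nlinarith
    · have := htm.2; nlinarith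
  have h0mem : (0:ℝ) ∈ Set.Ioo (-lam) lam := ⟨by linarith, hlam⟩
  -- continuity of g on Ioo
  have hgat : ∀ s ∈ Set.Ioo (-lam) lam, ContinuousAt g s := by
    intro s hs
    have hs' : s / lam ∈ Set.Ioo (-1:ℝ) 1 := by
      constructor
      · rw [lt_div_iff₀ hlam]; nlinarith [hs.1]
      · rw [div_lt_one hlam]; exact hs.2
    have h1 : ContinuousAt (fun s : ℝ => s / lam) s := (continuous_id.div_const lam).continuousAt
    have h2 : ContinuousAt (fun s : ℝ => artanh (s / lam)) s :=
      ContinuousAt.comp (f := fun s : ℝ => s / lam) (continuousAt_artanh hs') h1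
    exact h2.const_mul lam
  -- derivative of H on Ioo
  have hderiv : ∀ u ∈ Set.Ioo (-lam) lam, HasDerivAt H (2 * r * g u + a) u := by
    intro u hu
    have hsub : Set.uIcc (0:ℝ) u ⊆ Set.Ioo (-lam) lam :=
      (Set.ordConnected_Ioo).uIcc_subset h0mem hu
    have hint : IntervalIntegrable g MeasureTheory.volume 0 u :=
      ((continuousOn_of_forall_continuousAt hgat).mono hsub).intervalIntegrable
    have hmeas := ContinuousAt.stronglyMeasurableAtFilter (μ := MeasureTheory.volume)
      isOpen_Ioo hgat u hu
    have hF := intervalIntegral.integral_hasDerivAt_right hint hmeas (hgat u hu)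
    have := (hF.const_mul (2 * r)).add ((hasDerivAt_id u).const_mul a)
    simpa [hH, hg, Pi.add_def] using this
  have hlr : 2 * r * (lam * x₀) + a = 0 := by
    rw [hx₀]; field_simp; ring
  have hderivpos : ∀ u ∈ Set.Ioo (-lam) lam, ustar < u → 0 < 2 * r * g u + a := by
    intro u hu hlt
    have hs' : u / lam ∈ Set.Ioo (-1:ℝ) 1 := by
      constructor
      · rw [lt_div_iff₀ hlam]; nlinarith [hu.1]
      · rw [div_lt_one hlam]; exact hu.2
    have hgt : Real.tanh x₀ < u / lam := by
      rw [lt_div_iff₀ hlam]; nlinarith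
    have := artanh_strictMonoOn htm hs' hgt
    rw [artanh_tanh] at this
    have : lam * x₀ < lam * artanh (u / lam) := by nlinarith
    simp only [hg]; nlinarith
  have hderivneg : ∀ u ∈ Set.Ioo (-lam) lam, u < ustar → 2 * r * g u + a < 0 := by
    intro u hu hlt
    have hs' : u / lam ∈ Set.Ioo (-1:ℝ) 1 := by
      constructor
      · rw [lt_div_iff₀ hlam]; nlinarith [hu.1]
      · rw [div_lt_one hlam]; exact hu.2
    have hgt : u / lam < Real.tanh x₀ := by
      rw [div_lt_iff₀ hlam]; nlinarith
    have := artanh_strictMonoOn hs' htm hgt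
    rw [artanh_tanh] at this
    have : lam * artanh (u / lam) < lam * x₀ := by nlinarith
    simp only [hg]; nlinarith
  have hIcoSub : Set.Ico ustar lam ⊆ Set.Ioo (-lam) lam := fun z hz =>
    ⟨lt_of_lt_of_le hmem.1 hz.1, hz.2⟩
  have hIocSub : Set.Ioc (-lam) ustar ⊆ Set.Ioo (-lam) lam := fun z hz =>
    ⟨hz.1, lt_of_le_of_lt hz.2 hmem.2⟩
  have hmono : StrictMonoOn H (Set.Ico ustar lam) := by
    apply strictMonoOn_of_deriv_pos (convex_Ico _ _)
    · exact continuousOn_of_forall_continuousAt fun z hz =>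
        (hderiv z (hIcoSub hz)).continuousAt
    · intro z hz
      rw [interior_Ico] at hz
      have hz' : z ∈ Set.Ioo (-lam) lam := hIcoSub ⟨le_of_lt hz.1, hz.2⟩
      rw [(hderiv z hz').deriv]
      exact hderivpos z hz' hz.1
  have hanti : StrictAntiOn H (Set.Ioc (-lam) ustar) := by
    apply strictAntiOn_of_deriv_neg (convex_Ioc _ _)
    · exact continuousOn_of_forall_continuousAt fun z hz =>
        (hderiv z (hIocSub hz)).continuousAt
    · intro z hz
      rw [interior_Ioc] at hz
      have hz' : z ∈ Set.Ioo (-lam) lam := hIocSub ⟨hz.1, le_of_lt hz.2⟩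
      rw [(hderiv z hz').deriv]
      exact hderivneg z hz' hz.2
  have hkey : ∀ u ∈ Set.Ioo (-lam) lam, u ≠ ustar → H ustar < H u := by
    intro u hu hne
    rcases lt_or_gt_of_ne hne with h | h
    · exact hanti ⟨hu.1, le_of_lt h⟩ ⟨hmem.1, le_refl _⟩ h
    · exact hmono ⟨le_refl _, hmem.2⟩ ⟨le_of_lt h, hu.2⟩ h
  refine ⟨hmem, fun u hu => ?_, fun u hu heq => ?_⟩
  · rcases eq_or_ne u ustar with h | h
    · rw [h]
    · exact le_of_lt (hkey u hu h)
  · by_contra h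
    exact absurd heq (ne_of_gt (hkey u hu h))
end

section
/- Let n, m ∈ ℕ, and let f : ℝⁿ → ℝⁿ, g : ℝⁿ → ℝ^{n×m}, u : ℝⁿ → ℝ^m be continuous, e : ℝ → ℝ^m be continuous, Q : ℝⁿ → ℝ and U : ℝ^m → ℝ be continuous, and let V : ℝⁿ → ℝ be continuously differentiable. Assume that for every y ∈ ℝⁿ: Q(y) + U(u(y)) + ⟨∇V(y), f(y) + g(y)u(y)⟩ = 0. Let x : ℝ → ℝⁿ be differentiable, satisfying ẋ(τ) = f(x(τ)) + g(x(τ))(u(x(τ)) + e(τ)) for all τ ∈ ℝ. Then for every t ∈ ℝ and T > 0: V(x(t)) − V(x(t−T)) − ∫_{t−T}^{t} ⟨∇V(x(τ)), g(x(τ)) e(τ)⟩ dτ = − ∫_{t−T}^{t} (Q(x(τ)) + U(u(x(τ)))) dτ. -/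
open Matrix

/-- Integral temporal-difference (exploration-HJB) equation: if `V` solves the HJB
equation `0 = Q(y) + U(u(y)) + ⟨∇V(y), f(y) + g(y)u(y)⟩` for all `y`, and `x` solves
`ẋ = f(x) + g(x)(u(x) + e)`, then for all `t` and `T > 0`,
`V(x(t)) − V(x(t−T)) − ∫_{t−T}^t ⟨∇V(x(τ)), g(x(τ))e(τ)⟩ dτ
  = − ∫_{t−T}^t (Q(x(τ)) + U(u(x(τ)))) dτ`. -/
theorem integral_temporal_difference (n m : ℕ)
    (f : EuclideanSpace ℝ (Fin n) → EuclideanSpace ℝ (Fin n))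
    (g : EuclideanSpace ℝ (Fin n) → Matrix (Fin n) (Fin m) ℝ)
    (u : EuclideanSpace ℝ (Fin n) → (Fin m → ℝ))
    (e : ℝ → (Fin m → ℝ))
    (Q : EuclideanSpace ℝ (Fin n) → ℝ) (U : (Fin m → ℝ) → ℝ)
    (V : EuclideanSpace ℝ (Fin n) → ℝ)
    (hf : Continuous f) (hg : Continuous g) (hu : Continuous u) (he : Continuous e)
    (hQ : Continuous Q) (hU : Continuous U) (hV : ContDiff ℝ 1 V)
    (hHJB : ∀ y : EuclideanSpace ℝ (Fin n),
      Q y + U (u y)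
        + (inner ℝ (gradient V y)
            (f y + (WithLp.equiv 2 (Fin n → ℝ)).symm (g y *ᵥ u y)) : ℝ) = 0)
    (x : ℝ → EuclideanSpace ℝ (Fin n))
    (hx : ∀ τ : ℝ, HasDerivAt x
      (f (x τ) + (WithLp.equiv 2 (Fin n → ℝ)).symm (g (x τ) *ᵥ (u (x τ) + e τ))) τ)
    (t T : ℝ) (hT : 0 < T) :
    V (x t) - V (x (t - T))
        - ∫ τ in (t - T)..t,
            (inner ℝ (gradient V (x τ))
              ((WithLp.equiv 2 (Fin n → ℝ)).symm (g (x τ) *ᵥ e τ)) : ℝ) =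
      - ∫ τ in (t - T)..t, (Q (x τ) + U (u (x τ))) := by
  have hxc : Continuous x :=
    continuous_iff_continuousAt.mpr fun τ => (hx τ).continuousAt
  -- continuity of gradient
  have hgradc : Continuous (fun y => gradient V y) := by
    have h1 : Continuous (fderiv ℝ V) := hV.continuous_fderiv one_ne_zero
    have : (fun y => gradient V y)
        = fun y => (InnerProductSpace.toDual ℝ _).symm (fderiv ℝ V y) := rfl
    rw [this]
    exact (InnerProductSpace.toDual ℝ _).symm.continuous.comp h1
  -- the derivative of V ∘ x
  set F : ℝ → ℝ := fun τ =>
    -(Q (x τ) + U (u (x τ)))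
      + (inner ℝ (gradient V (x τ))
          ((WithLp.equiv 2 (Fin n → ℝ)).symm (g (x τ) *ᵥ e τ)) : ℝ) with hF
  have key : ∀ τ : ℝ, HasDerivAt (fun s => V (x s)) (F τ) τ := by
    intro τ
    have hgrad : HasGradientAt V (gradient V (x τ)) (x τ) :=
      ((hV.differentiable one_ne_zero) (x τ)).hasGradientAt
    have hcomp := hgrad.hasFDerivAt.comp_hasDerivAt τ (hx τ)
    have hval : (InnerProductSpace.toDual ℝ _) (gradient V (x τ))
          (f (x τ) + (WithLp.equiv 2 (Fin n → ℝ)).symm (g (x τ) *ᵥ (u (x τ) + e τ)))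
        = F τ := by
      rw [InnerProductSpace.toDual_apply_apply]
      have hsplit : (WithLp.equiv 2 (Fin n → ℝ)).symm (g (x τ) *ᵥ (u (x τ) + e τ))
          = (WithLp.equiv 2 (Fin n → ℝ)).symm (g (x τ) *ᵥ u (x τ))
            + (WithLp.equiv 2 (Fin n → ℝ)).symm (g (x τ) *ᵥ e τ) := by
        rw [Matrix.mulVec_add]; rfl
      rw [hsplit, ← add_assoc, inner_add_right, hF]
      have := hHJB (x τ)
      simp only
      linarith
    rw [← hval]
    exact hcomp
  -- continuity of F
  have hFc : Continuous F := by
    have h1 : Continuous fun τ => Q (x τ) + U (u (x τ)) :=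
      (hQ.comp hxc).add (hU.comp (hu.comp hxc))
    have h2 : Continuous fun τ =>
        ((WithLp.equiv 2 (Fin n → ℝ)).symm (g (x τ) *ᵥ e τ)) := by
      exact (PiLp.continuous_toLp 2 _).comp ((hg.comp hxc).matrix_mulVec he)
    exact (h1.neg).add ((hgradc.comp hxc).inner h2)
  have hint : ∫ τ in (t - T)..t, F τ = V (x t) - V (x (t - T)) :=
    intervalIntegral.integral_eq_sub_of_hasDerivAt (fun τ _ => key τ)
      (hFc.intervalIntegrable _ _)
  have h1c : Continuous fun τ => Q (x τ) + U (u (x τ)) :=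
    (hQ.comp hxc).add (hU.comp (hu.comp hxc))
  have h2c : Continuous fun τ =>
      (inner ℝ (gradient V (x τ))
        ((WithLp.equiv 2 (Fin n → ℝ)).symm (g (x τ) *ᵥ e τ)) : ℝ) :=
    (hgradc.comp hxc).inner
      ((PiLp.continuous_toLp 2 _).comp ((hg.comp hxc).matrix_mulVec he))
  have hsplit : ∫ τ in (t - T)..t, F τ
      = (-∫ τ in (t - T)..t, (Q (x τ) + U (u (x τ))))
        + ∫ τ in (t - T)..t,
            (inner ℝ (gradient V (x τ))
              ((WithLp.equiv 2 (Fin n → ℝ)).symm (g (x τ) *ᵥ e τ)) : ℝ) := by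
    rw [hF]
    beta_reduce
    rw [intervalIntegral.integral_add (f := fun τ => -(Q (x τ) + U (u (x τ))))
      (h1c.neg.intervalIntegrable _ _)
      (h2c.intervalIntegrable _ _), intervalIntegral.integral_neg]
  rw [hint] at hsplit
  linarith
end
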